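/- arXiv:1309.4637 — 9 statements merged into one kernel-verified Lean document; each statement's English description precedes it below -/
import Mathlib

section
/- The coindeterminacy of ⟨ā₀,ā₁,ā₂⟩ and ⟨ā₁,ā₂,ā₃⟩, when nonempty, is a coset of the subgroup (ā₀ \\ ā₂) + (ā₁ // ā₃) in H: the difference of any two elements of the coindeterminacy lies in (ā₀ \\ ā₂) + (ā₁ // ā₃), and the sum of any element of the coindeterminacy with any element of (ā₀ \\ ā₂) + (ā₁ // ā₃) again lies in the coindeterminacy. -/
def memLD {A : Type*} [Ring A] (d : A →+ A) (a b x : A) : Prop :=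
  d x = 0 ∧ ∃ z, d z = 0 ∧ ∃ u, d u = a * x + z * b

def memRD {A : Type*} [Ring A] (d : A →+ A) (a b x : A) : Prop :=
  d x = 0 ∧ ∃ z, d z = 0 ∧ ∃ u, d u = a * z + x * b

/-- s represents an element of the coindeterminacy of ⟨ā₀,ā₁,ā₂⟩ and ⟨ā₁,ā₂,ā₃⟩:
s is homologous to x + y for suitable x, y. -/
def coindMem {A : Type*} [Ring A] (d : A →+ A) (a₀ a₁ a₂ a₃ s : A) : Prop :=
  ∃ x y, d x = a₁ * a₂ ∧ (∃ z, d z = a₀ * a₁ ∧ ∃ u, d u = a₀ * x + z * a₂) ∧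
    d y = a₁ * a₂ ∧ (∃ w, d w = a₂ * a₃ ∧ ∃ u, d u = a₁ * w + y * a₃) ∧
    ∃ u, d u = s + x + y

/-- The coindeterminacy is a coset of (ā₀ \\ ā₂) + (ā₁ // ā₃): differences of
two elements lie in the subgroup, and the coindeterminacy is stable under
adding elements of the subgroup. -/
theorem stmt_7 {A : Type*} [Ring A] (d : A →+ A)
    (hchar : ∀ a : A, a + a = 0)
    (hdd : ∀ a : A, d (d a) = 0)
    (hleib : ∀ u v : A, d (u * v) = d u * v + u * d v)
    (a₀ a₁ a₂ a₃ : A)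
    (hc0 : d a₀ = 0) (hc1 : d a₁ = 0) (hc2 : d a₂ = 0) (hc3 : d a₃ = 0)
    (hb01 : ∃ u, d u = a₀ * a₁) (hb12 : ∃ u, d u = a₁ * a₂) (hb23 : ∃ u, d u = a₂ * a₃) :
    (∀ s t, coindMem d a₀ a₁ a₂ a₃ s → coindMem d a₀ a₁ a₂ a₃ t →
      ∃ c₁ c₂, memLD d a₀ a₂ c₁ ∧ memRD d a₁ a₃ c₂ ∧
        ∃ u, d u = (s + t) + (c₁ + c₂)) ∧
    (∀ s c₁ c₂, coindMem d a₀ a₁ a₂ a₃ s → memLD d a₀ a₂ c₁ →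
      memRD d a₁ a₃ c₂ → coindMem d a₀ a₁ a₂ a₃ (s + c₁ + c₂)) := by
  constructor
  · rintro s t ⟨x, y, hx, ⟨z, hz, u1, hu1⟩, hy, ⟨w, hw, u2, hu2⟩, us, hus⟩
      ⟨x', y', hx', ⟨z', hz', u1', hu1'⟩, hy', ⟨w', hw', u2', hu2'⟩, ut, hut⟩
    refine ⟨x + x', y + y', ⟨?_, z + z', ?_, u1 + u1', ?_⟩, ⟨?_, w + w', ?_, u2 + u2', ?_⟩,
      us + ut, ?_⟩
    · simp [hx, hx', hchar]
    · simp [hz, hz', hchar]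
    · simp [hu1, hu1', mul_add, add_mul]; abel
    · simp [hy, hy', hchar]
    · simp [hw, hw', hchar]
    · simp [hu2, hu2', mul_add, add_mul]; abel
    · simp [hus, hut]; abel
  · rintro s c₁ c₂ ⟨x, y, hx, ⟨z, hz, u1, hu1⟩, hy, ⟨w, hw, u2, hu2⟩, us, hus⟩
      ⟨hc₁, z₁, hz₁, v₁, hv₁⟩ ⟨hc₂, z₂, hz₂, v₂, hv₂⟩
    refine ⟨x + c₁, y + c₂, ?_, ⟨z + z₁, ?_, u1 + v₁, ?_⟩, ?_, ⟨w + z₂, ?_, u2 + v₂, ?_⟩,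
      us, ?_⟩
    · simp [hx, hc₁]
    · simp [hz, hz₁]
    · simp [hu1, hv₁, mul_add, add_mul]; abel
    · simp [hy, hc₂]
    · simp [hw, hz₂]
    · simp [hu2, hv₂, mul_add, add_mul]; abel
    · rw [hus, show s + c₁ + c₂ + (x + c₁) + (y + c₂)
        = s + x + y + ((c₁ + c₁) + (c₂ + c₂)) by abel, hchar, hchar, add_zero, add_zero]
end

section
/- The fourfold Massey product ⟨ā₀,ā₁,ā₂,ā₃⟩ is defined (i.e., there exist a₀₁, a₁₂, a₂₃ with d(a₀₁)=a₀a₁, d(a₁₂)=a₁a₂, d(a₂₃)=a₂a₃ such that a₀a₁₂ + a₀₁a₂ and a₁a₂₃ + a₁₂a₃ are boundaries) if and only if the zero class belongs to the coindeterminacy of ⟨ā₀,ā₁,ā₂⟩ and ⟨ā₁,ā₂,ā₃⟩. -/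
/-- The fourfold Massey product ⟨ā₀,ā₁,ā₂,ā₃⟩ is defined if and only if zero
belongs to the coindeterminacy of ⟨ā₀,ā₁,ā₂⟩ and ⟨ā₁,ā₂,ā₃⟩. -/
theorem stmt_8 {A : Type*} [Ring A] (d : A →+ A)
    (hchar : ∀ a : A, a + a = 0)
    (hdd : ∀ a : A, d (d a) = 0)
    (hleib : ∀ u v : A, d (u * v) = d u * v + u * d v)
    (a₀ a₁ a₂ a₃ : A)
    (hc0 : d a₀ = 0) (hc1 : d a₁ = 0) (hc2 : d a₂ = 0) (hc3 : d a₃ = 0)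
    (hb01 : ∃ u, d u = a₀ * a₁) (hb12 : ∃ u, d u = a₁ * a₂) (hb23 : ∃ u, d u = a₂ * a₃)
    (hz1 : ∃ x z, d x = a₁ * a₂ ∧ d z = a₀ * a₁ ∧ ∃ u, d u = a₀ * x + z * a₂)
    (hz2 : ∃ y w, d y = a₁ * a₂ ∧ d w = a₂ * a₃ ∧ ∃ u, d u = a₁ * w + y * a₃) :
    (∃ a01 a12 a23, d a01 = a₀ * a₁ ∧ d a12 = a₁ * a₂ ∧ d a23 = a₂ * a₃ ∧
      (∃ u, d u = a₀ * a12 + a01 * a₂) ∧ (∃ u, d u = a₁ * a23 + a12 * a₃)) ↔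
    (∃ x y, d x = a₁ * a₂ ∧
      (∃ z, d z = a₀ * a₁ ∧ ∃ u, d u = a₀ * x + z * a₂) ∧
      d y = a₁ * a₂ ∧
      (∃ w, d w = a₂ * a₃ ∧ ∃ u, d u = a₁ * w + y * a₃) ∧
      ∃ u, d u = x + y) := by
  constructor
  · rintro ⟨a01, a12, a23, h01, h12, h23, hu1, hu2⟩
    exact ⟨a12, a12, h12, ⟨a01, h01, hu1⟩, h12, ⟨a23, h23, hu2⟩,
      ⟨0, by simp [hchar a12]⟩⟩
  · rintro ⟨x, y, hx, ⟨z, hz, u1, hu1⟩, hy, ⟨w, hw, u2, hu2⟩, v, hv⟩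
    refine ⟨z, x, w, hz, hx, hw, ⟨u1, hu1⟩, ⟨u2 + v * a₃, ?_⟩⟩
    have hxy : x = y + d v := by
      rw [hv, ← add_assoc, add_comm y x, add_assoc, hchar, add_zero]
    rw [map_add, hu2, hleib, hc3, mul_zero, add_zero, hxy, add_mul]
    abel
end

section
/- If the homology classes ā₀, ā₁, ā₂, ā₃ are unchanged (i.e., aᵢ' is homologous to aᵢ for each i, meaning aᵢ + aᵢ' is a boundary), then the coindeterminacy of ⟨ā₀',ā₁',ā₂'⟩ and ⟨ā₁',ā₂',ā₃'⟩ equals the coindeterminacy of ⟨ā₀,ā₁,ā₂⟩ and ⟨ā₁,ā₂,ā₃⟩ as subsets of H. -/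
private lemma coind_forward {A : Type*} [Ring A] (d : A →+ A)
    (hchar : ∀ a : A, a + a = 0)
    (hleib : ∀ u v : A, d (u * v) = d u * v + u * d v)
    (a₀ a₁ a₂ a₃ a₀' a₁' a₂' a₃' : A)
    (hc0 : d a₀ = 0) (hc1 : d a₁ = 0) (hc2 : d a₂ = 0) (hc3 : d a₃ = 0)
    (hc0' : d a₀' = 0) (hc1' : d a₁' = 0) (hc2' : d a₂' = 0) (hc3' : d a₃' = 0)
    (e₀ e₁ e₂ e₃ : A)
    (he₀ : d e₀ = a₀ + a₀') (he₁ : d e₁ = a₁ + a₁')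
    (he₂ : d e₂ = a₂ + a₂') (he₃ : d e₃ = a₃ + a₃')
    (s : A) (h : coindMem d a₀ a₁ a₂ a₃ s) : coindMem d a₀' a₁' a₂' a₃' s := by
  have h2 : ∀ a : A, (2:A) * a = 0 := fun a => by rw [two_mul, hchar]
  have h3 : ∀ a : A, (3:A) * a = a := fun a => by
    rw [show (3:A) = 2 + 1 by norm_num, add_mul, h2, one_mul, zero_add]
  have h4 : ∀ a : A, (4:A) * a = 0 := fun a => by
    rw [show (4:A) = 2 + 2 by norm_num, add_mul, h2, zero_add]
  have h5 : ∀ a : A, (5:A) * a = a := fun a => by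
    rw [show (5:A) = 4 + 1 by norm_num, add_mul, h4, one_mul, zero_add]
  have h6 : ∀ a : A, (6:A) * a = 0 := fun a => by
    rw [show (6:A) = 4 + 2 by norm_num, add_mul, h4, h2, zero_add]
  have h7 : ∀ a : A, (7:A) * a = a := fun a => by
    rw [show (7:A) = 6 + 1 by norm_num, add_mul, h6, one_mul, zero_add]
  have h8 : ∀ a : A, (8:A) * a = 0 := fun a => by
    rw [show (8:A) = 6 + 2 by norm_num, add_mul, h6, h2, zero_add]
  obtain ⟨x, y, hx, ⟨z, hz, u₁, hu₁⟩, hy, ⟨w, hw, u₂, hu₂⟩, u₃, hu₃⟩ := h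
  refine ⟨x + (e₁*a₂ + a₁'*e₂), y + (e₁*a₂ + a₁'*e₂), ?_,
    ⟨z + (e₀*a₁ + a₀'*e₁), ?_,
     u₁ + e₀*x + z*e₂ + e₀*(e₁*a₂ + a₁'*e₂) + (e₀*a₁ + a₀'*e₁)*e₂ + e₀*e₁*a₂ + e₀*(a₁'*e₂), ?_⟩,
    ?_,
    ⟨w + (e₂*a₃ + a₂'*e₃), ?_,
     u₂ + e₁*w + y*e₃ + e₁*(e₂*a₃ + a₂'*e₃) + (e₁*a₂ + a₁'*e₂)*e₃ + e₁*e₂*a₃ + e₁*(a₂'*e₃), ?_⟩,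
    u₃, ?_⟩ <;>
  · simp only [map_add, hleib, hx, hy, hz, hw, hu₁, hu₂, hu₃, he₀, he₁, he₂, he₃,
      hc0, hc1, hc2, hc3, hc0', hc1', hc2', hc3',
      mul_zero, zero_mul, add_zero, zero_add, mul_add, add_mul, mul_assoc]
    abel_nf
    simp [two_mul, hchar, h2, h3, h4, h5, h6, h7, h8]

/-- The coindeterminacy only depends on the homology classes ā₀, ā₁, ā₂, ā₃. -/
theorem stmt_9 {A : Type*} [Ring A] (d : A →+ A)
    (hchar : ∀ a : A, a + a = 0)
    (hdd : ∀ a : A, d (d a) = 0)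
    (hleib : ∀ u v : A, d (u * v) = d u * v + u * d v)
    (a₀ a₁ a₂ a₃ : A)
    (hc0 : d a₀ = 0) (hc1 : d a₁ = 0) (hc2 : d a₂ = 0) (hc3 : d a₃ = 0)
    (hb01 : ∃ u, d u = a₀ * a₁) (hb12 : ∃ u, d u = a₁ * a₂) (hb23 : ∃ u, d u = a₂ * a₃)
    (a₀' a₁' a₂' a₃' : A)
    (hc0' : d a₀' = 0) (hc1' : d a₁' = 0) (hc2' : d a₂' = 0) (hc3' : d a₃' = 0)
    (hh0 : ∃ u, d u = a₀ + a₀') (hh1 : ∃ u, d u = a₁ + a₁')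
    (hh2 : ∃ u, d u = a₂ + a₂') (hh3 : ∃ u, d u = a₃ + a₃')
    (hb01' : ∃ u, d u = a₀' * a₁') (hb12' : ∃ u, d u = a₁' * a₂')
    (hb23' : ∃ u, d u = a₂' * a₃') :
    ∀ s : A, coindMem d a₀ a₁ a₂ a₃ s ↔ coindMem d a₀' a₁' a₂' a₃' s := by
  obtain ⟨e₀, he₀⟩ := hh0
  obtain ⟨e₁, he₁⟩ := hh1
  obtain ⟨e₂, he₂⟩ := hh2
  obtain ⟨e₃, he₃⟩ := hh3
  intro s
  constructor
  · exact coind_forward d hchar hleib a₀ a₁ a₂ a₃ a₀' a₁' a₂' a₃'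
      hc0 hc1 hc2 hc3 hc0' hc1' hc2' hc3' e₀ e₁ e₂ e₃ he₀ he₁ he₂ he₃ s
  · exact coind_forward d hchar hleib a₀' a₁' a₂' a₃' a₀ a₁ a₂ a₃
      hc0' hc1' hc2' hc3' hc0 hc1 hc2 hc3 e₀ e₁ e₂ e₃
      (by rw [he₀, add_comm]) (by rw [he₁, add_comm])
      (by rw [he₂, add_comm]) (by rw [he₃, add_comm]) s
end

section
/- If the fourfold Massey product ⟨ā₀,ā₁,ā₂,ā₃⟩ is defined, then the coindeterminacy of ⟨ā₀,ā₁,ā₂⟩ and ⟨ā₁,ā₂,ā₃⟩ equals the subgroup (ā₀ \\ ā₂) + (ā₁ // ā₃) of H (i.e., it is the trivial coset). -/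
/-- If the fourfold Massey product is defined, the coindeterminacy equals the
subgroup (ā₀ \\ ā₂) + (ā₁ // ā₃), i.e. is the trivial coset. -/
theorem stmt_10 {A : Type*} [Ring A] (d : A →+ A)
    (hchar : ∀ a : A, a + a = 0)
    (hdd : ∀ a : A, d (d a) = 0)
    (hleib : ∀ u v : A, d (u * v) = d u * v + u * d v)
    (a₀ a₁ a₂ a₃ : A)
    (hc0 : d a₀ = 0) (hc1 : d a₁ = 0) (hc2 : d a₂ = 0) (hc3 : d a₃ = 0)
    (hb01 : ∃ u, d u = a₀ * a₁) (hb12 : ∃ u, d u = a₁ * a₂) (hb23 : ∃ u, d u = a₂ * a₃)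
    (hdef : ∃ a01 a12 a23, d a01 = a₀ * a₁ ∧ d a12 = a₁ * a₂ ∧
      d a23 = a₂ * a₃ ∧ (∃ u, d u = a₀ * a12 + a01 * a₂) ∧
      (∃ u, d u = a₁ * a23 + a12 * a₃)) :
    ∀ s : A, coindMem d a₀ a₁ a₂ a₃ s ↔
      ∃ c₁ c₂, memLD d a₀ a₂ c₁ ∧ memRD d a₁ a₃ c₂ ∧
        ∃ u, d u = s + c₁ + c₂ := by

  obtain ⟨a01, a12, a23, hd01, hd12, hd23, ⟨v1, hv1⟩, ⟨v2, hv2⟩⟩ := hdef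
  intro s
  constructor
  · rintro ⟨x, y, hx, ⟨z, hz, u1, hu1⟩, hy, ⟨w, hw, u2, hu2⟩, u3, hu3⟩
    refine ⟨x + a12, y + a12, ⟨?_, z + a01, ?_, u1 + v1, ?_⟩,
      ⟨?_, w + a23, ?_, u2 + v2, ?_⟩, u3, ?_⟩
    · rw [map_add, hx, hd12, hchar]
    · rw [map_add, hz, hd01, hchar]
    · rw [map_add, hu1, hv1]; noncomm_ring
    · rw [map_add, hy, hd12, hchar]
    · rw [map_add, hw, hd23, hchar]
    · rw [map_add, hu2, hv2]; noncomm_ring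
    · rw [hu3]
      have : s + (x + a12) + (y + a12) = s + x + y + (a12 + a12) := by abel
      rw [this, hchar, add_zero]
  · rintro ⟨c₁, c₂, ⟨hc₁, z, hz, u1, hu1⟩, ⟨hc₂, w, hw, u2, hu2⟩, u3, hu3⟩
    refine ⟨c₁ + a12, c₂ + a12, ?_, ⟨z + a01, ?_, u1 + v1, ?_⟩,
      ?_, ⟨w + a23, ?_, u2 + v2, ?_⟩, u3, ?_⟩
    · rw [map_add, hc₁, hd12, zero_add]
    · rw [map_add, hz, hd01, zero_add]
    · rw [map_add, hu1, hv1]; noncomm_ring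
    · rw [map_add, hc₂, hd12, zero_add]
    · rw [map_add, hw, hd23, zero_add]
    · rw [map_add, hu2, hv2]; noncomm_ring
    · rw [hu3]
      have : s + (c₁ + a12) + (c₂ + a12) = s + c₁ + c₂ + (a12 + a12) := by abel
      rw [this, hchar, add_zero]
end

section
/- In the DGA A', the fourfold Massey product ⟨ā₀,ā₁,ā₂,ā₃⟩ is NOT defined: there do not exist b₀₁, b₁₂, b₂₃ in A' with d(b₀₁)=a₀a₁, d(b₁₂)=a₁a₂, d(b₂₃)=a₂a₃ such that both a₀b₁₂ + b₀₁a₂ and a₁b₂₃ + b₁₂a₃ are boundaries. -/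
open MvPolynomial

/-- The polynomial algebra over F₂ on generators
a₀, a₁, a₂, a₃, a₀₁, a₁₂, a₂₃, c, a₀₂, a₁₃ (indices 0,…,9). -/
abbrev P : Type := MvPolynomial (Fin 10) (ZMod 2)

/-- Values of the differential of A' on the generators: as for A except
d(a₁₃)=a₁a₂₃+(a₁₂+c)a₃. -/
noncomputable def dvalA' : Fin 10 → P :=
  ![0, 0, 0, 0, X 0 * X 1, X 1 * X 2, X 2 * X 3, 0,
    X 0 * X 5 + X 4 * X 2, X 1 * X 6 + (X 5 + X 7) * X 3]

/-- The differential of A': the unique F₂-linear derivation with the values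
`dvalA'` on the generators. -/
noncomputable def dA' : P → P := fun p => mkDerivation (ZMod 2) dvalA' p

namespace MasseyAux

noncomputable def e (i : Fin 10) : Fin 10 →₀ ℕ := Finsupp.single i 1

def wt (s : Fin 10 →₀ ℕ) : ℕ := ∑ i, s i

lemma wt_le_of_le {q t : Fin 10 →₀ ℕ} (h : q ≤ t) : wt q ≤ wt t :=
  Finset.sum_le_sum fun i _ => (Finsupp.le_def.mp h) i

lemma eq_of_le_of_wt {q t : Fin 10 →₀ ℕ} (h : q ≤ t) (hw : wt t ≤ wt q) : q = t := by
  have h1 : ∀ i ∈ Finset.univ, q i ≤ t i := fun i _ => (Finsupp.le_def.mp h) i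
  have h2 : ∑ i, q i = ∑ i, t i := le_antisymm (Finset.sum_le_sum h1) hw
  exact Finsupp.ext fun i => (Finset.sum_eq_sum_iff_of_le h1).mp h2 i (Finset.mem_univ i)

lemma wt_single (i : Fin 10) (n : ℕ) : wt (Finsupp.single i n) = n := by
  simp [wt, Finsupp.single_apply]

lemma wt_add (a b : Fin 10 →₀ ℕ) : wt (a + b) = wt a + wt b := by
  simp [wt, Finset.sum_add_distrib]

lemma wt_ee (a b : Fin 10) : wt (e a + e b) = 2 := by
  rw [wt_add]; simp [e, wt_single]

lemma wt_sub_le (s : Fin 10 →₀ ℕ) (q : Fin 10 →₀ ℕ) : wt (s - q) ≤ wt s :=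
  Finset.sum_le_sum fun i _ => by rw [Finsupp.tsub_apply]; exact Nat.sub_le _ _

lemma wt_sub_lt {s : Fin 10 →₀ ℕ} {j : Fin 10} (h : j ∈ s.support) :
    wt (s - Finsupp.single j 1) < wt s := by
  refine Finset.sum_lt_sum (fun i _ => by rw [Finsupp.tsub_apply]; exact Nat.sub_le _ _)
    ⟨j, Finset.mem_univ j, ?_⟩
  rw [Finsupp.tsub_apply, Finsupp.single_eq_same]
  have : s j ≠ 0 := Finsupp.mem_support_iff.mp h
  omega

lemma XX (a b : Fin 10) : (X a * X b : P) = monomial (e a + e b) 1 := by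
  rw [show (X a : P) = monomial (e a) 1 from rfl, show (X b : P) = monomial (e b) 1 from rfl,
    monomial_mul, one_mul]

lemma d0 : dvalA' 0 = 0 := rfl
lemma d1 : dvalA' 1 = 0 := rfl
lemma d2 : dvalA' 2 = 0 := rfl
lemma d3 : dvalA' 3 = 0 := rfl
lemma d7 : dvalA' 7 = 0 := rfl
lemma d4 : dvalA' 4 = monomial (e 0 + e 1) 1 := by rw [show dvalA' 4 = X 0 * X 1 from rfl, XX]
lemma d5 : dvalA' 5 = monomial (e 1 + e 2) 1 := by rw [show dvalA' 5 = X 1 * X 2 from rfl, XX]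
lemma d6 : dvalA' 6 = monomial (e 2 + e 3) 1 := by rw [show dvalA' 6 = X 2 * X 3 from rfl, XX]
lemma d8 : dvalA' 8 = monomial (e 0 + e 5) 1 + monomial (e 4 + e 2) 1 := by
  rw [show dvalA' 8 = X 0 * X 5 + X 4 * X 2 from rfl, XX, XX]
lemma d9 : dvalA' 9 = monomial (e 1 + e 6) 1 + (monomial (e 5 + e 3) 1 + monomial (e 7 + e 3) 1) := by
  rw [show dvalA' 9 = X 1 * X 6 + (X 5 + X 7) * X 3 from rfl, add_mul, XX, XX, XX]

lemma dA'_add (p q : P) : dA' (p + q) = dA' p + dA' q := by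
  simp [dA']

lemma dA'_C (a : ZMod 2) : dA' (C a) = 0 := by
  simpa [dA'] using derivation_C (mkDerivation (ZMod 2) dvalA') a

lemma dA'_mul_X (p : P) (j : Fin 10) : dA' (p * X j) = p * dvalA' j + X j * dA' p := by
  show (mkDerivation (ZMod 2) dvalA') (p * X j) = _
  rw [Derivation.leibniz, mkDerivation_X, smul_eq_mul, smul_eq_mul]
  rfl

lemma coeff_mul_mono_small {t : Fin 10 →₀ ℕ} (ht : wt t ≤ 1) {q : Fin 10 →₀ ℕ}
    (hq : wt q = 2) (p : P) : coeff t (p * monomial q 1) = 0 := by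
  rw [coeff_mul_monomial', if_neg]
  intro h
  have := wt_le_of_le h
  omega

lemma coeff_mul_mono_two {t : Fin 10 →₀ ℕ} (ht : wt t = 2) {q : Fin 10 →₀ ℕ}
    (hq : wt q = 2) (p : P) :
    coeff t (p * monomial q 1) = coeff t (monomial q (1 : ZMod 2)) * coeff 0 p := by
  rw [coeff_mul_monomial', coeff_monomial]
  by_cases h : q ≤ t
  · have hqt : q = t := eq_of_le_of_wt h (by omega)
    subst hqt
    simp
  · rw [if_neg h, if_neg (fun he => h (le_of_eq he)), zero_mul]

lemma coeff_mul_dval_small {t : Fin 10 →₀ ℕ} (ht : wt t ≤ 1) (p : P) (j : Fin 10) :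
    coeff t (p * dvalA' j) = 0 := by
  fin_cases j
  · show coeff t (p * dvalA' 0) = 0; rw [d0]; simp
  · show coeff t (p * dvalA' 1) = 0; rw [d1]; simp
  · show coeff t (p * dvalA' 2) = 0; rw [d2]; simp
  · show coeff t (p * dvalA' 3) = 0; rw [d3]; simp
  · show coeff t (p * dvalA' 4) = 0; rw [d4]; exact coeff_mul_mono_small ht (wt_ee 0 1) p
  · show coeff t (p * dvalA' 5) = 0; rw [d5]; exact coeff_mul_mono_small ht (wt_ee 1 2) p
  · show coeff t (p * dvalA' 6) = 0; rw [d6]; exact coeff_mul_mono_small ht (wt_ee 2 3) p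
  · show coeff t (p * dvalA' 7) = 0; rw [d7]; simp
  · show coeff t (p * dvalA' 8) = 0
    rw [d8, mul_add, coeff_add, coeff_mul_mono_small ht (wt_ee 0 5) p,
      coeff_mul_mono_small ht (wt_ee 4 2) p, add_zero]
  · show coeff t (p * dvalA' 9) = 0
    rw [d9, mul_add, mul_add, coeff_add, coeff_add,
      coeff_mul_mono_small ht (wt_ee 1 6) p, coeff_mul_mono_small ht (wt_ee 5 3) p,
      coeff_mul_mono_small ht (wt_ee 7 3) p]
    simp

lemma coeff_mul_dval_two {t : Fin 10 →₀ ℕ} (ht : wt t = 2) (p : P) (j : Fin 10) :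
    coeff t (p * dvalA' j) = coeff t (dvalA' j) * coeff 0 p := by
  fin_cases j
  · show coeff t (p * dvalA' 0) = coeff t (dvalA' 0) * coeff 0 p; rw [d0]; simp
  · show coeff t (p * dvalA' 1) = coeff t (dvalA' 1) * coeff 0 p; rw [d1]; simp
  · show coeff t (p * dvalA' 2) = coeff t (dvalA' 2) * coeff 0 p; rw [d2]; simp
  · show coeff t (p * dvalA' 3) = coeff t (dvalA' 3) * coeff 0 p; rw [d3]; simp
  · show coeff t (p * dvalA' 4) = coeff t (dvalA' 4) * coeff 0 p
    rw [d4]; exact coeff_mul_mono_two ht (wt_ee 0 1) p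
  · show coeff t (p * dvalA' 5) = coeff t (dvalA' 5) * coeff 0 p
    rw [d5]; exact coeff_mul_mono_two ht (wt_ee 1 2) p
  · show coeff t (p * dvalA' 6) = coeff t (dvalA' 6) * coeff 0 p
    rw [d6]; exact coeff_mul_mono_two ht (wt_ee 2 3) p
  · show coeff t (p * dvalA' 7) = coeff t (dvalA' 7) * coeff 0 p; rw [d7]; simp
  · show coeff t (p * dvalA' 8) = coeff t (dvalA' 8) * coeff 0 p
    rw [d8, mul_add, coeff_add, coeff_mul_mono_two ht (wt_ee 0 5) p,
      coeff_mul_mono_two ht (wt_ee 4 2) p, coeff_add, add_mul]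
  · show coeff t (p * dvalA' 9) = coeff t (dvalA' 9) * coeff 0 p
    rw [d9, mul_add, mul_add, coeff_add, coeff_add,
      coeff_mul_mono_two ht (wt_ee 1 6) p, coeff_mul_mono_two ht (wt_ee 5 3) p,
      coeff_mul_mono_two ht (wt_ee 7 3) p, coeff_add, coeff_add, add_mul, add_mul]

lemma aux1 (p : P) : ∀ s : Fin 10 →₀ ℕ, wt s ≤ 1 → coeff s (dA' p) = 0 := by
  induction p using MvPolynomial.induction_on with
  | C a => intro s hs; rw [dA'_C]; simp
  | add p q hp hq => intro s hs; rw [dA'_add, coeff_add, hp s hs, hq s hs, add_zero]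
  | mul_X p j hp =>
    intro s hs
    rw [dA'_mul_X, coeff_add, coeff_mul_dval_small hs, coeff_X_mul', zero_add]
    split
    · exact hp _ (le_trans (wt_sub_le s (Finsupp.single j 1)) hs)
    · rfl

lemma main {t : Fin 10 →₀ ℕ} (ht : wt t = 2) (p : P) :
    coeff t (dA' p) = ∑ i, coeff t (dvalA' i) * coeff (e i) p := by
  induction p using MvPolynomial.induction_on with
  | C a =>
    rw [dA'_C]
    have : ∀ i : Fin 10, coeff (e i) (C a : P) = 0 := fun i => by
      rw [coeff_C, if_neg]
      exact fun h => one_ne_zero (Finsupp.single_eq_zero.mp h.symm)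
    simp [this]
  | add p q hp hq =>
    rw [dA'_add, coeff_add, hp, hq, ← Finset.sum_add_distrib]
    congr 1; funext i; rw [coeff_add, mul_add]
  | mul_X p j hp =>
    rw [dA'_mul_X, coeff_add]
    have h1 : coeff t (X j * dA' p) = 0 := by
      rw [coeff_X_mul']
      split
      · next h => exact aux1 p _ (by have := wt_sub_lt h; omega)
      · rfl
    rw [h1, add_zero, coeff_mul_dval_two ht]
    rw [Finset.sum_eq_single j]
    · congr 1
      rw [coeff_mul_X', if_pos]
      · have h0 : e j - Finsupp.single j 1 = 0 := tsub_self (Finsupp.single j 1)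
        rw [h0]
      · simp [e, Finsupp.mem_support_iff]
    · intro i _ hij
      rw [coeff_mul_X', if_neg, mul_zero]
      simp only [e, Finsupp.mem_support_iff, Finsupp.single_apply, ne_eq, not_not]
      rw [if_neg (fun h => hij h)]
    · intro h; exact absurd (Finset.mem_univ j) h

lemma ee_apply (a b i : Fin 10) :
    (e a + e b) i = (if a = i then 1 else 0) + (if b = i then 1 else 0) := by
  simp [e, Finsupp.single_apply]

lemma ee_ne {a b c d : Fin 10} (i : Fin 10)
    (h : ¬ ((if a = i then (1:ℕ) else 0) + (if b = i then 1 else 0)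
      = (if c = i then 1 else 0) + (if d = i then 1 else 0))) :
    e a + e b ≠ e c + e d := fun he => h (by rw [← ee_apply, ← ee_apply, he])

lemma cm_ne {q t : Fin 10 →₀ ℕ} (h : q ≠ t) : coeff t (monomial q (1:ZMod 2)) = 0 := by
  rw [coeff_monomial, if_neg h]

lemma cm_eq (q : Fin 10 →₀ ℕ) : coeff q (monomial q (1:ZMod 2)) = 1 := by
  rw [coeff_monomial, if_pos rfl]

lemma mem_ee {a b i : Fin 10}
    (h : ((if a = i then (1:ℕ) else 0) + (if b = i then 1 else 0)) ≠ 0) :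
    i ∈ (e a + e b).support := by
  rw [Finsupp.mem_support_iff, ee_apply]; exact h

lemma notMem_ee {a b i : Fin 10}
    (h : ((if a = i then (1:ℕ) else 0) + (if b = i then 1 else 0)) = 0) :
    i ∉ (e a + e b).support := by
  rw [Finsupp.mem_support_iff, ee_apply]; simpa using h

lemma coeff_dA'_single {t : Fin 10 →₀ ℕ} (ht : wt t = 2) {k : Fin 10}
    (hk : coeff t (dvalA' k) = 1)
    (h0 : ∀ i : Fin 10, i ≠ k → coeff t (dvalA' i) = 0) (b : P) :
    coeff t (dA' b) = coeff (e k) b := by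
  rw [main ht b, Finset.sum_eq_single k]
  · rw [hk, one_mul]
  · intro i _ hik; rw [h0 i hik, zero_mul]
  · intro h; exact absurd (Finset.mem_univ k) h

lemma c23 (b : P) : coeff (e 2 + e 3) (dA' b) = coeff (e 6) b := by
  refine coeff_dA'_single (wt_ee 2 3) ?_ ?_ b
  · rw [d6, cm_eq]
  · intro i hik
    fin_cases i
    · show coeff _ (dvalA' 0) = 0; rw [d0, coeff_zero]
    · show coeff _ (dvalA' 1) = 0; rw [d1, coeff_zero]
    · show coeff _ (dvalA' 2) = 0; rw [d2, coeff_zero]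
    · show coeff _ (dvalA' 3) = 0; rw [d3, coeff_zero]
    · show coeff _ (dvalA' 4) = 0; rw [d4, cm_ne (ee_ne 0 (by decide))]
    · show coeff _ (dvalA' 5) = 0; rw [d5, cm_ne (ee_ne 1 (by decide))]
    · exact absurd rfl hik
    · show coeff _ (dvalA' 7) = 0; rw [d7, coeff_zero]
    · show coeff _ (dvalA' 8) = 0
      rw [d8, coeff_add, cm_ne (ee_ne 0 (by decide)), cm_ne (ee_ne 4 (by decide)), add_zero]
    · show coeff _ (dvalA' 9) = 0
      rw [d9, coeff_add, coeff_add, cm_ne (ee_ne 1 (by decide)),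
        cm_ne (ee_ne 5 (by decide)), cm_ne (ee_ne 7 (by decide))]
      rfl

lemma c16 (b : P) : coeff (e 1 + e 6) (dA' b) = coeff (e 9) b := by
  refine coeff_dA'_single (wt_ee 1 6) ?_ ?_ b
  · rw [d9, coeff_add, coeff_add, cm_eq, cm_ne (ee_ne 5 (by decide)),
      cm_ne (ee_ne 7 (by decide))]
    rfl
  · intro i hik
    fin_cases i
    · show coeff _ (dvalA' 0) = 0; rw [d0, coeff_zero]
    · show coeff _ (dvalA' 1) = 0; rw [d1, coeff_zero]
    · show coeff _ (dvalA' 2) = 0; rw [d2, coeff_zero]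
    · show coeff _ (dvalA' 3) = 0; rw [d3, coeff_zero]
    · show coeff _ (dvalA' 4) = 0; rw [d4, cm_ne (ee_ne 0 (by decide))]
    · show coeff _ (dvalA' 5) = 0; rw [d5, cm_ne (ee_ne 2 (by decide))]
    · show coeff _ (dvalA' 6) = 0; rw [d6, cm_ne (ee_ne 2 (by decide))]
    · show coeff _ (dvalA' 7) = 0; rw [d7, coeff_zero]
    · show coeff _ (dvalA' 8) = 0
      rw [d8, coeff_add, cm_ne (ee_ne 0 (by decide)), cm_ne (ee_ne 4 (by decide)), add_zero]
    · exact absurd rfl hik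

lemma c73 (b : P) : coeff (e 7 + e 3) (dA' b) = coeff (e 9) b := by
  refine coeff_dA'_single (wt_ee 7 3) ?_ ?_ b
  · rw [d9, coeff_add, coeff_add, cm_ne (ee_ne 1 (by decide)),
      cm_ne (ee_ne 5 (by decide)), cm_eq]
    rfl
  · intro i hik
    fin_cases i
    · show coeff _ (dvalA' 0) = 0; rw [d0, coeff_zero]
    · show coeff _ (dvalA' 1) = 0; rw [d1, coeff_zero]
    · show coeff _ (dvalA' 2) = 0; rw [d2, coeff_zero]
    · show coeff _ (dvalA' 3) = 0; rw [d3, coeff_zero]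
    · show coeff _ (dvalA' 4) = 0; rw [d4, cm_ne (ee_ne 0 (by decide))]
    · show coeff _ (dvalA' 5) = 0; rw [d5, cm_ne (ee_ne 1 (by decide))]
    · show coeff _ (dvalA' 6) = 0; rw [d6, cm_ne (ee_ne 2 (by decide))]
    · show coeff _ (dvalA' 7) = 0; rw [d7, coeff_zero]
    · show coeff _ (dvalA' 8) = 0
      rw [d8, coeff_add, cm_ne (ee_ne 0 (by decide)), cm_ne (ee_ne 4 (by decide)), add_zero]
    · exact absurd rfl hik

lemma c70 (b : P) : coeff (e 7 + e 0) (dA' b) = 0 := by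
  rw [main (wt_ee 7 0) b]
  refine Finset.sum_eq_zero ?_
  intro i _
  suffices h : coeff (e 7 + e 0) (dvalA' i) = 0 by rw [h, zero_mul]
  fin_cases i
  · show coeff _ (dvalA' 0) = 0; rw [d0, coeff_zero]
  · show coeff _ (dvalA' 1) = 0; rw [d1, coeff_zero]
  · show coeff _ (dvalA' 2) = 0; rw [d2, coeff_zero]
  · show coeff _ (dvalA' 3) = 0; rw [d3, coeff_zero]
  · show coeff _ (dvalA' 4) = 0; rw [d4, cm_ne (ee_ne 1 (by decide))]
  · show coeff _ (dvalA' 5) = 0; rw [d5, cm_ne (ee_ne 1 (by decide))]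
  · show coeff _ (dvalA' 6) = 0; rw [d6, cm_ne (ee_ne 2 (by decide))]
  · show coeff _ (dvalA' 7) = 0; rw [d7, coeff_zero]
  · show coeff _ (dvalA' 8) = 0
    rw [d8, coeff_add, cm_ne (ee_ne 5 (by decide)), cm_ne (ee_ne 4 (by decide)), add_zero]
  · show coeff _ (dvalA' 9) = 0
    rw [d9, coeff_add, coeff_add, cm_ne (ee_ne 1 (by decide)),
      cm_ne (ee_ne 5 (by decide)), cm_ne (ee_ne 3 (by decide))]
    rfl

end MasseyAux


open MasseyAux

/-- In A', the fourfold Massey product ⟨ā₀,ā₁,ā₂,ā₃⟩ is not defined. -/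
theorem stmt_13 :
    ¬ ∃ b01 b12 b23 : P, dA' b01 = X 0 * X 1 ∧ dA' b12 = X 1 * X 2 ∧
      dA' b23 = X 2 * X 3 ∧
      (∃ u, dA' u = X 0 * b12 + b01 * X 2) ∧
      (∃ u, dA' u = X 1 * b23 + b12 * X 3) := by
  rintro ⟨b01, b12, b23, h1, h2, h3, ⟨u, h4⟩, ⟨v, h5⟩⟩
  have hb23 : coeff (e 6) b23 = 1 := by
    rw [← c23, h3, XX, cm_eq]
  have hv : coeff (e 9) v = 1 := by
    rw [← c16, h5, coeff_add, coeff_X_mul', if_pos (mem_ee (by decide)),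
      coeff_mul_X', if_neg (notMem_ee (by decide)), add_zero,
      show (e 1 + e 6) - Finsupp.single 1 1 = e 6 from add_tsub_cancel_left (e 1) (e 6), hb23]
  have hb12 : coeff (e 7) b12 = 1 := by
    have h := c73 v
    rw [h5, coeff_add, coeff_X_mul', if_neg (notMem_ee (by decide)),
      coeff_mul_X', if_pos (mem_ee (by decide)), zero_add,
      show (e 7 + e 3) - Finsupp.single 3 1 = e 7 from add_tsub_cancel_right (e 7) (e 3),
      hv] at h
    exact h
  have h := c70 u
  rw [h4, coeff_add, coeff_X_mul', if_pos (mem_ee (by decide)),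
    coeff_mul_X', if_neg (notMem_ee (by decide)), add_zero,
    show (e 7 + e 0) - Finsupp.single 0 1 = e 7 from add_tsub_cancel_right (e 7) (e 0),
    hb12] at h
  exact one_ne_zero h
end

section
/- In the DGA A', the cycle c is not a boundary, and for every pair x, y with d(x) = d(y) = a₁a₂ such that a₀x + za₂ is a boundary for some z with d(z) = a₀a₁, and a₁w + ya₃ is a boundary for some w with d(w) = a₂a₃, the element x + y is homologous to c modulo (ā₀ \\ ā₂) + (ā₁ // ā₃); in particular zero does not lie in the coindeterminacy of ⟨ā₀,ā₁,ā₂⟩ and ⟨ā₁,ā₂,ā₃⟩. -/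
open MvPolynomial

lemma dval0 : dvalA' 0 = 0 := rfl
lemma dval1 : dvalA' 1 = 0 := rfl
lemma dval2 : dvalA' 2 = 0 := rfl
lemma dval3 : dvalA' 3 = 0 := rfl
lemma dval4 : dvalA' 4 = X 0 * X 1 := rfl
lemma dval5 : dvalA' 5 = X 1 * X 2 := rfl
lemma dval6 : dvalA' 6 = X 2 * X 3 := rfl
lemma dval7 : dvalA' 7 = 0 := rfl
lemma dval8 : dvalA' 8 = X 0 * X 5 + X 4 * X 2 := rfl
lemma dval9 : dvalA' 9 = X 1 * X 6 + (X 5 + X 7) * X 3 := rfl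
lemma dA'_eq (p : P) : dA' p = mkDerivation (ZMod 2) dvalA' p := rfl
lemma dA'_add (p q : P) : dA' (p+q) = dA' p + dA' q := map_add (mkDerivation (ZMod 2) dvalA') p q
lemma dA'_X (i : Fin 10) : dA' (X i) = dvalA' i := mkDerivation_X (R := ZMod 2) dvalA' i
lemma dA'_C (a : ZMod 2) : dA' (C a) = 0 := by
  rw [dA'_eq, ← MvPolynomial.algebraMap_eq]
  exact Derivation.map_algebraMap _ a
lemma dA'_zero : dA' 0 = 0 := map_zero (mkDerivation (ZMod 2) dvalA')
lemma dA'_mulX (p : P) (i : Fin 10) : dA' (p * X i) = dA' p * X i + p * dvalA' i := by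
  rw [dA'_eq, Derivation.leibniz, ← dA'_eq, ← dA'_eq, dA'_X, smul_eq_mul, smul_eq_mul]
  ring
local notation "e" i => (Finsupp.single i 1 : Fin 10 →₀ ℕ)
lemma XX (a b : Fin 10) : (X a : P) * X b = monomial ((e a) + (e b)) 1 := by
  rw [X, X, monomial_mul, one_mul]
lemma coeff_mul_XX (q : P) (a b : Fin 10) (m : Fin 10 →₀ ℕ) :
    coeff m (q * (X a * X b)) = if ((e a) + (e b)) ≤ m then coeff (m - ((e a) + (e b))) q else 0 := by
  rw [XX, coeff_mul_monomial']
  split <;> simp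
lemma not_pair_le_single (a b j : Fin 10) (hab : a ≠ b) : ¬ (((e a) + (e b)) ≤ (e j)) := by
  intro h
  have ha := Finsupp.le_def.mp h a
  have hb := Finsupp.le_def.mp h b
  simp [Finsupp.single_apply] at ha hb
  split_ifs at ha hb <;> simp_all
lemma not_pair_le_zero (a b : Fin 10) : ¬ (((e a) + (e b)) ≤ (0 : Fin 10 →₀ ℕ)) := by
  intro h
  have ha := Finsupp.le_def.mp h a
  simp [Finsupp.single_apply] at ha

lemma coeff_zero_dA' (p : P) : coeff 0 (dA' p) = 0 := by
  induction p using MvPolynomial.induction_on with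
  | C a => rw [dA'_C]; simp
  | add p q hp hq => rw [dA'_add, coeff_add, hp, hq, add_zero]
  | mul_X p i hp =>
    rw [dA'_mulX, coeff_add, coeff_mul_X']
    fin_cases i <;>
      simp [dval0, dval1, dval2, dval3, dval4, dval5, dval6, dval7, dval8, dval9,
        mul_add, add_mul, coeff_add, coeff_mul_XX, not_pair_le_zero]

lemma coeff_single_dA' (j : Fin 10) (p : P) : coeff (e j) (dA' p) = 0 := by
  induction p using MvPolynomial.induction_on with
  | C a => rw [dA'_C]; simp
  | add p q hp hq => rw [dA'_add, coeff_add, hp, hq, add_zero]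
  | mul_X p i hp =>
    rw [dA'_mulX, coeff_add, coeff_mul_X']
    have h1 : (if i ∈ (e j).support then coeff ((e j) - (e i)) (dA' p) else 0) = 0 := by
      split
      · rcases eq_or_ne i j with rfl | hne
        · rw [tsub_self, coeff_zero_dA']
        · exfalso
          rename_i hmem
          rw [Finsupp.support_single_ne_zero j one_ne_zero] at hmem
          simp at hmem
          exact hne hmem
      · rfl
    rw [h1, zero_add]
    fin_cases i <;>
      simp [dval0, dval1, dval2, dval3, dval4, dval5, dval6, dval7, dval8, dval9,
        mul_add, add_mul, coeff_add, coeff_mul_XX,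
        not_pair_le_single 0 1 j (by decide), not_pair_le_single 1 2 j (by decide),
        not_pair_le_single 2 3 j (by decide), not_pair_le_single 0 5 j (by decide),
        not_pair_le_single 4 2 j (by decide), not_pair_le_single 1 6 j (by decide),
        not_pair_le_single 5 3 j (by decide), not_pair_le_single 7 3 j (by decide)]
lemma nle_01_07 : ¬ (((e 0)+(e 1)) ≤ ((e 0)+(e 7))) := by
  intro h; have h1 := Finsupp.le_def.mp h 1; simp [Finsupp.single_apply] at h1

lemma nle_12_07 : ¬ (((e 1)+(e 2)) ≤ ((e 0)+(e 7))) := by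
  intro h; have h1 := Finsupp.le_def.mp h 1; simp [Finsupp.single_apply] at h1

lemma nle_23_07 : ¬ (((e 2)+(e 3)) ≤ ((e 0)+(e 7))) := by
  intro h; have h1 := Finsupp.le_def.mp h 2; simp [Finsupp.single_apply] at h1

lemma nle_05_07 : ¬ (((e 0)+(e 5)) ≤ ((e 0)+(e 7))) := by
  intro h; have h1 := Finsupp.le_def.mp h 5; simp [Finsupp.single_apply] at h1

lemma nle_42_07 : ¬ (((e 4)+(e 2)) ≤ ((e 0)+(e 7))) := by
  intro h; have h1 := Finsupp.le_def.mp h 4; simp [Finsupp.single_apply] at h1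

lemma nle_16_07 : ¬ (((e 1)+(e 6)) ≤ ((e 0)+(e 7))) := by
  intro h; have h1 := Finsupp.le_def.mp h 1; simp [Finsupp.single_apply] at h1

lemma nle_53_07 : ¬ (((e 5)+(e 3)) ≤ ((e 0)+(e 7))) := by
  intro h; have h1 := Finsupp.le_def.mp h 5; simp [Finsupp.single_apply] at h1

lemma nle_73_07 : ¬ (((e 7)+(e 3)) ≤ ((e 0)+(e 7))) := by
  intro h; have h1 := Finsupp.le_def.mp h 3; simp [Finsupp.single_apply] at h1

lemma nle_01_16 : ¬ (((e 0)+(e 1)) ≤ ((e 1)+(e 6))) := by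
  intro h; have h1 := Finsupp.le_def.mp h 0; simp [Finsupp.single_apply] at h1

lemma nle_12_16 : ¬ (((e 1)+(e 2)) ≤ ((e 1)+(e 6))) := by
  intro h; have h1 := Finsupp.le_def.mp h 2; simp [Finsupp.single_apply] at h1

lemma nle_23_16 : ¬ (((e 2)+(e 3)) ≤ ((e 1)+(e 6))) := by
  intro h; have h1 := Finsupp.le_def.mp h 2; simp [Finsupp.single_apply] at h1

lemma nle_05_16 : ¬ (((e 0)+(e 5)) ≤ ((e 1)+(e 6))) := by
  intro h; have h1 := Finsupp.le_def.mp h 0; simp [Finsupp.single_apply] at h1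

lemma nle_42_16 : ¬ (((e 4)+(e 2)) ≤ ((e 1)+(e 6))) := by
  intro h; have h1 := Finsupp.le_def.mp h 4; simp [Finsupp.single_apply] at h1

lemma nle_53_16 : ¬ (((e 5)+(e 3)) ≤ ((e 1)+(e 6))) := by
  intro h; have h1 := Finsupp.le_def.mp h 5; simp [Finsupp.single_apply] at h1

lemma nle_73_16 : ¬ (((e 7)+(e 3)) ≤ ((e 1)+(e 6))) := by
  intro h; have h1 := Finsupp.le_def.mp h 7; simp [Finsupp.single_apply] at h1

lemma nle_01_73 : ¬ (((e 0)+(e 1)) ≤ ((e 7)+(e 3))) := by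
  intro h; have h1 := Finsupp.le_def.mp h 0; simp [Finsupp.single_apply] at h1

lemma nle_12_73 : ¬ (((e 1)+(e 2)) ≤ ((e 7)+(e 3))) := by
  intro h; have h1 := Finsupp.le_def.mp h 1; simp [Finsupp.single_apply] at h1

lemma nle_23_73 : ¬ (((e 2)+(e 3)) ≤ ((e 7)+(e 3))) := by
  intro h; have h1 := Finsupp.le_def.mp h 2; simp [Finsupp.single_apply] at h1

lemma nle_05_73 : ¬ (((e 0)+(e 5)) ≤ ((e 7)+(e 3))) := by
  intro h; have h1 := Finsupp.le_def.mp h 0; simp [Finsupp.single_apply] at h1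

lemma nle_42_73 : ¬ (((e 4)+(e 2)) ≤ ((e 7)+(e 3))) := by
  intro h; have h1 := Finsupp.le_def.mp h 4; simp [Finsupp.single_apply] at h1

lemma nle_16_73 : ¬ (((e 1)+(e 6)) ≤ ((e 7)+(e 3))) := by
  intro h; have h1 := Finsupp.le_def.mp h 1; simp [Finsupp.single_apply] at h1

lemma nle_53_73 : ¬ (((e 5)+(e 3)) ≤ ((e 7)+(e 3))) := by
  intro h; have h1 := Finsupp.le_def.mp h 5; simp [Finsupp.single_apply] at h1

lemma nle_01_23 : ¬ (((e 0)+(e 1)) ≤ ((e 2)+(e 3))) := by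
  intro h; have h1 := Finsupp.le_def.mp h 0; simp [Finsupp.single_apply] at h1

lemma nle_12_23 : ¬ (((e 1)+(e 2)) ≤ ((e 2)+(e 3))) := by
  intro h; have h1 := Finsupp.le_def.mp h 1; simp [Finsupp.single_apply] at h1

lemma nle_05_23 : ¬ (((e 0)+(e 5)) ≤ ((e 2)+(e 3))) := by
  intro h; have h1 := Finsupp.le_def.mp h 0; simp [Finsupp.single_apply] at h1

lemma nle_42_23 : ¬ (((e 4)+(e 2)) ≤ ((e 2)+(e 3))) := by
  intro h; have h1 := Finsupp.le_def.mp h 4; simp [Finsupp.single_apply] at h1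

lemma nle_16_23 : ¬ (((e 1)+(e 6)) ≤ ((e 2)+(e 3))) := by
  intro h; have h1 := Finsupp.le_def.mp h 1; simp [Finsupp.single_apply] at h1

lemma nle_53_23 : ¬ (((e 5)+(e 3)) ≤ ((e 2)+(e 3))) := by
  intro h; have h1 := Finsupp.le_def.mp h 5; simp [Finsupp.single_apply] at h1

lemma nle_73_23 : ¬ (((e 7)+(e 3)) ≤ ((e 2)+(e 3))) := by
  intro h; have h1 := Finsupp.le_def.mp h 7; simp [Finsupp.single_apply] at h1

lemma coeff_07_dA' (p : P) : coeff ((e 0)+(e 7)) (dA' p) = 0 := by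
  induction p using MvPolynomial.induction_on with
  | C a => rw [dA'_C]; simp
  | add p q hp hq => rw [dA'_add, coeff_add, hp, hq, add_zero]
  | mul_X p i hp =>
    rw [dA'_mulX, coeff_add, coeff_mul_X']
    fin_cases i <;>
      simp [dval0, dval1, dval2, dval3, dval4, dval5, dval6, dval7, dval8, dval9,
        mul_add, add_mul, coeff_add, coeff_mul_XX, coeff_single_dA', coeff_zero_dA',
        add_tsub_cancel_left, add_tsub_cancel_right, tsub_self,
        nle_01_07, nle_12_07, nle_23_07, nle_05_07, nle_42_07, nle_16_07, nle_53_07, nle_73_07]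

lemma coeff_16_dA' (p : P) : coeff ((e 1)+(e 6)) (dA' p) = coeff (e 9) p := by
  induction p using MvPolynomial.induction_on with
  | C a => rw [dA'_C]; simp [coeff_C, Finsupp.single_eq_zero, eq_comm]
  | add p q hp hq => rw [dA'_add, coeff_add, coeff_add, hp, hq]
  | mul_X p i hp =>
    rw [dA'_mulX, coeff_add, coeff_mul_X', coeff_mul_X']
    fin_cases i <;>
      simp [dval0, dval1, dval2, dval3, dval4, dval5, dval6, dval7, dval8, dval9,
        mul_add, add_mul, coeff_add, coeff_mul_XX, coeff_single_dA', coeff_zero_dA',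
        add_tsub_cancel_left, add_tsub_cancel_right, tsub_self,
        nle_01_16, nle_12_16, nle_23_16, nle_05_16, nle_42_16, nle_53_16, nle_73_16]

lemma coeff_73_dA' (p : P) : coeff ((e 7)+(e 3)) (dA' p) = coeff (e 9) p := by
  induction p using MvPolynomial.induction_on with
  | C a => rw [dA'_C]; simp [coeff_C, Finsupp.single_eq_zero, eq_comm]
  | add p q hp hq => rw [dA'_add, coeff_add, coeff_add, hp, hq]
  | mul_X p i hp =>
    rw [dA'_mulX, coeff_add, coeff_mul_X', coeff_mul_X']
    fin_cases i <;>
      simp [dval0, dval1, dval2, dval3, dval4, dval5, dval6, dval7, dval8, dval9,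
        mul_add, add_mul, coeff_add, coeff_mul_XX, coeff_single_dA', coeff_zero_dA',
        add_tsub_cancel_left, add_tsub_cancel_right, tsub_self,
        nle_01_73, nle_12_73, nle_23_73, nle_05_73, nle_42_73, nle_16_73, nle_53_73]

lemma coeff_23_dA' (p : P) : coeff ((e 2)+(e 3)) (dA' p) = coeff (e 6) p := by
  induction p using MvPolynomial.induction_on with
  | C a => rw [dA'_C]; simp [coeff_C, Finsupp.single_eq_zero, eq_comm]
  | add p q hp hq => rw [dA'_add, coeff_add, coeff_add, hp, hq]
  | mul_X p i hp =>
    rw [dA'_mulX, coeff_add, coeff_mul_X', coeff_mul_X']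
    fin_cases i <;>
      simp [dval0, dval1, dval2, dval3, dval4, dval5, dval6, dval7, dval8, dval9,
        mul_add, add_mul, coeff_add, coeff_mul_XX, coeff_single_dA', coeff_zero_dA',
        add_tsub_cancel_left, add_tsub_cancel_right, tsub_self,
        nle_01_23, nle_12_23, nle_05_23, nle_42_23, nle_16_23, nle_53_23, nle_73_23]

lemma h2 : ∀ a : P, a + a = 0 := fun a => by
  rw [← two_smul (ZMod 2) a, show (2 : ZMod 2) = 0 from rfl, zero_smul]

lemma mem16 : (1 : Fin 10) ∈ ((e 1)+(e 6)).support := by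
  simp [Finsupp.mem_support_iff, Finsupp.single_apply]
lemma nmem16 : (3 : Fin 10) ∉ ((e 1)+(e 6)).support := by
  simp [Finsupp.mem_support_iff, Finsupp.single_apply]
lemma nmem73 : (1 : Fin 10) ∉ ((e 7)+(e 3)).support := by
  simp [Finsupp.mem_support_iff, Finsupp.single_apply]
lemma mem73 : (3 : Fin 10) ∈ ((e 7)+(e 3)).support := by
  simp [Finsupp.mem_support_iff, Finsupp.single_apply]
lemma mem07 : (0 : Fin 10) ∈ ((e 0)+(e 7)).support := by
  simp [Finsupp.mem_support_iff, Finsupp.single_apply]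
lemma nmem07 : (2 : Fin 10) ∉ ((e 0)+(e 7)).support := by
  simp [Finsupp.mem_support_iff, Finsupp.single_apply]


/-- In A', the cycle c is not a boundary; every element x + y of the
coindeterminacy of ⟨ā₀,ā₁,ā₂⟩ and ⟨ā₁,ā₂,ā₃⟩ is homologous to c modulo
(ā₀ \\ ā₂) + (ā₁ // ā₃); in particular zero is not in the coindeterminacy. -/
theorem stmt_15 :
    (dA' (X 7) = 0 ∧ ¬ ∃ u : P, dA' u = X 7) ∧
    (∀ x y : P, dA' x = X 1 * X 2 →
      (∃ z, dA' z = X 0 * X 1 ∧ ∃ u, dA' u = X 0 * x + z * X 2) →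
      dA' y = X 1 * X 2 →
      (∃ w, dA' w = X 2 * X 3 ∧ ∃ u, dA' u = X 1 * w + y * X 3) →
      ∃ c₁ c₂ : P,
        (dA' c₁ = 0 ∧ ∃ z, dA' z = 0 ∧ ∃ u, dA' u = X 0 * c₁ + z * X 2) ∧
        (dA' c₂ = 0 ∧ ∃ z, dA' z = 0 ∧ ∃ u, dA' u = X 1 * z + c₂ * X 3) ∧
        ∃ u, dA' u = x + y + X 7 + c₁ + c₂) ∧
    ¬ ∃ x y : P, dA' x = X 1 * X 2 ∧
      (∃ z, dA' z = X 0 * X 1 ∧ ∃ u, dA' u = X 0 * x + z * X 2) ∧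
      dA' y = X 1 * X 2 ∧
      (∃ w, dA' w = X 2 * X 3 ∧ ∃ u, dA' u = X 1 * w + y * X 3) ∧
      ∃ u, dA' u = x + y := by
  refine ⟨⟨by rw [dA'_X, dval7], ?_⟩, ?_, ?_⟩
  · rintro ⟨u, hu⟩
    have h := coeff_single_dA' 7 u
    rw [hu] at h
    simp [coeff_X] at h
  · rintro x y hx ⟨z, hz, u1, hu1⟩ hy ⟨w, hw, u2, hu2⟩
    refine ⟨x + X 5, y + X 5 + X 7,
      ⟨?_, z + X 4, ?_, u1 + X 8, ?_⟩, ⟨?_, w + X 6, ?_, u2 + X 9, ?_⟩, 0, ?_⟩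
    · rw [dA'_add, hx, dA'_X, dval5, h2]
    · rw [dA'_add, hz, dA'_X, dval4, h2]
    · rw [dA'_add, hu1, dA'_X, dval8]; ring
    · rw [dA'_add, dA'_add, hy, dA'_X, dA'_X, dval5, dval7, add_zero, h2]
    · rw [dA'_add, hw, dA'_X, dval6, h2]
    · rw [dA'_add, hu2, dA'_X, dval9]; ring
    · rw [dA'_zero,
        show x + y + X 7 + (x + X 5) + (y + X 5 + X 7)
          = (x+x)+((y+y)+(((X 7 : P)+X 7)+((X 5 : P)+X 5))) from by ring,
        h2, h2, h2, h2, add_zero, add_zero, add_zero]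
  · rintro ⟨x, y, hx, ⟨z, hz, u1, hu1⟩, hy, ⟨w, hw, u2, hu2⟩, u, hu⟩
    have hw6 : coeff (e 6) w = 1 := by
      have h := coeff_23_dA' w
      rw [hw, XX, coeff_monomial, if_pos rfl] at h
      exact h.symm
    have hu29 : coeff (e 9) u2 = 1 := by
      have h := coeff_16_dA' u2
      rw [hu2, coeff_add, coeff_X_mul', coeff_mul_X', if_pos mem16, if_neg nmem16,
        add_tsub_cancel_left, hw6, add_zero] at h
      exact h.symm
    have hy7 : coeff (e 7) y = 1 := by
      have h := coeff_73_dA' u2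
      rw [hu2, coeff_add, coeff_X_mul', coeff_mul_X', if_neg nmem73, if_pos mem73,
        add_tsub_cancel_right, hu29, zero_add] at h
      exact h
    have hx7 : coeff (e 7) x = 0 := by
      have h := coeff_07_dA' u1
      rw [hu1, coeff_add, coeff_X_mul', coeff_mul_X', if_pos mem07, if_neg nmem07,
        add_tsub_cancel_left, add_zero] at h
      exact h
    have h := coeff_single_dA' 7 u
    rw [hu, coeff_add, hx7, hy7, zero_add] at h
    exact one_ne_zero h
end

section
/- Suppose both threefold brackets ⟨ā₀,ā₁,ā₂⟩ and ⟨ā₁,ā₂,ā₃⟩ contain zero, and at least one of them is strictly zero (every representative is a boundary). Then the fourfold Massey product ⟨ā₀,ā₁,ā₂,ā₃⟩ is defined. -/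
/-- If both threefold brackets contain zero and at least one is strictly zero,
then the fourfold Massey product is defined. -/
theorem stmt_16 {A : Type*} [Ring A] (d : A →+ A)
    (hchar : ∀ a : A, a + a = 0)
    (hdd : ∀ a : A, d (d a) = 0)
    (hleib : ∀ u v : A, d (u * v) = d u * v + u * d v)
    (a₀ a₁ a₂ a₃ : A)
    (hc0 : d a₀ = 0) (hc1 : d a₁ = 0) (hc2 : d a₂ = 0) (hc3 : d a₃ = 0)
    (hb01 : ∃ u, d u = a₀ * a₁) (hb12 : ∃ u, d u = a₁ * a₂) (hb23 : ∃ u, d u = a₂ * a₃)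
    (hz1 : ∃ x z, d x = a₁ * a₂ ∧ d z = a₀ * a₁ ∧ ∃ u, d u = a₀ * x + z * a₂)
    (hz2 : ∃ y w, d y = a₁ * a₂ ∧ d w = a₂ * a₃ ∧ ∃ u, d u = a₁ * w + y * a₃)
    (hstrict :
      (∀ x z, d x = a₁ * a₂ → d z = a₀ * a₁ → ∃ u, d u = a₀ * x + z * a₂) ∨
      (∀ y w, d y = a₁ * a₂ → d w = a₂ * a₃ → ∃ u, d u = a₁ * w + y * a₃)) :
    ∃ a01 a12 a23, d a01 = a₀ * a₁ ∧ d a12 = a₁ * a₂ ∧ d a23 = a₂ * a₃ ∧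
      (∃ u, d u = a₀ * a12 + a01 * a₂) ∧ (∃ u, d u = a₁ * a23 + a12 * a₃) := by
  obtain ⟨x, z, hx, hzz, hu1⟩ := hz1
  obtain ⟨y, w, hy, hw, hu2⟩ := hz2
  rcases hstrict with hs | hs
  · exact ⟨z, y, w, hzz, hy, hw, hs y z hy hzz, hu2⟩
  · exact ⟨z, x, w, hzz, hx, hw, hu1, hs x w hx hw⟩
end

section
/- If zero belongs to the coindeterminacy of ⟨ā₀,ā₁,ā₂⟩ and ⟨ā₁,ā₂,ā₃⟩, i.e., there exist x, y with d(x) = d(y) = a₁a₂ satisfying the respective boundary conditions and with x + y a boundary, then there exists a common element u with d(u) = a₁a₂ such that a₀u + za₂ is a boundary for some z with d(z) = a₀a₁, AND a₁w + ua₃ is a boundary for some w with d(w) = a₂a₃. -/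
/-- If zero belongs to the coindeterminacy then there is a single common choice
u = a₁₂ working for both threefold brackets. -/
theorem stmt_17 {A : Type*} [Ring A] (d : A →+ A)
    (hchar : ∀ a : A, a + a = 0)
    (hdd : ∀ a : A, d (d a) = 0)
    (hleib : ∀ u v : A, d (u * v) = d u * v + u * d v)
    (a₀ a₁ a₂ a₃ : A)
    (hc0 : d a₀ = 0) (hc1 : d a₁ = 0) (hc2 : d a₂ = 0) (hc3 : d a₃ = 0)
    (hb01 : ∃ u, d u = a₀ * a₁) (hb12 : ∃ u, d u = a₁ * a₂) (hb23 : ∃ u, d u = a₂ * a₃) :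
    ∀ x y : A, d x = a₁ * a₂ →
      (∃ z, d z = a₀ * a₁ ∧ ∃ u, d u = a₀ * x + z * a₂) →
      d y = a₁ * a₂ →
      (∃ w, d w = a₂ * a₃ ∧ ∃ u, d u = a₁ * w + y * a₃) →
      (∃ u, d u = x + y) →
      ∃ v, d v = a₁ * a₂ ∧
        (∃ z, d z = a₀ * a₁ ∧ ∃ u, d u = a₀ * v + z * a₂) ∧
        (∃ w, d w = a₂ * a₃ ∧ ∃ u, d u = a₁ * w + v * a₃) := by
  rintro x y hx hx2 hy ⟨w, hw, u₂, hu₂⟩ ⟨u₃, hu₃⟩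
  refine ⟨x, hx, hx2, w, hw, u₂ + u₃ * a₃, ?_⟩
  have : d (u₂ + u₃ * a₃) = (a₁ * w + y * a₃) + ((x + y) * a₃ + u₃ * d a₃) := by
    rw [map_add, hleib, hu₂, hu₃]
  rw [this, hc3, mul_zero, add_zero, add_mul]
  have h2 : a₁ * w + y * a₃ + (x * a₃ + y * a₃) = a₁ * w + x * a₃ + (y * a₃ + y * a₃) := by
    abel
  rw [h2, hchar, add_zero]
end

section
/- If x satisfies d(x) = a₁a₂ and a₀x + za₂ is a boundary for some z with d(z) = a₀a₁, and y satisfies d(y) = a₁a₂ and a₁w + ya₃ is a boundary for some w with d(w) = a₂a₃, then the homology class of x + y (an element of the coindeterminacy) depends only on the data up to the stated choices; moreover if x' and y' are another such pair, then (x+y) + (x'+y') is a cycle whose class lies in (ā₀ \\ ā₂) + (ā₁ // ā₃). -/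
/-- The sum of two representatives of the coindeterminacy is a cycle whose
class lies in (ā₀ \\ ā₂) + (ā₁ // ā₃). -/
theorem stmt_19 {A : Type*} [Ring A] (d : A →+ A)
    (hchar : ∀ a : A, a + a = 0)
    (hdd : ∀ a : A, d (d a) = 0)
    (hleib : ∀ u v : A, d (u * v) = d u * v + u * d v)
    (a₀ a₁ a₂ a₃ : A)
    (hc0 : d a₀ = 0) (hc1 : d a₁ = 0) (hc2 : d a₂ = 0) (hc3 : d a₃ = 0)
    (hb01 : ∃ u, d u = a₀ * a₁) (hb12 : ∃ u, d u = a₁ * a₂) (hb23 : ∃ u, d u = a₂ * a₃) :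
    ∀ x y x' y' : A,
      d x = a₁ * a₂ → (∃ z, d z = a₀ * a₁ ∧ ∃ u, d u = a₀ * x + z * a₂) →
      d y = a₁ * a₂ → (∃ w, d w = a₂ * a₃ ∧ ∃ u, d u = a₁ * w + y * a₃) →
      d x' = a₁ * a₂ → (∃ z, d z = a₀ * a₁ ∧ ∃ u, d u = a₀ * x' + z * a₂) →
      d y' = a₁ * a₂ → (∃ w, d w = a₂ * a₃ ∧ ∃ u, d u = a₁ * w + y' * a₃) →
      d (x + y + x' + y') = 0 ∧
        ∃ c₁ c₂, memLD d a₀ a₂ c₁ ∧ memRD d a₁ a₃ c₂ ∧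
          ∃ u, d u = x + y + x' + y' + c₁ + c₂ := by
  rintro x y x' y' hx ⟨z, hz, u, hu⟩ hy ⟨w, hw, v, hv⟩ hx' ⟨z', hz', u', hu'⟩ hy' ⟨w', hw', v', hv'⟩
  have hsum : d (x + y + x' + y') = 0 := by
    simp only [map_add, hx, hy, hx', hy']
    rw [show a₁ * a₂ + a₁ * a₂ + a₁ * a₂ + a₁ * a₂ =
      (a₁ * a₂ + a₁ * a₂) + (a₁ * a₂ + a₁ * a₂) by abel, hchar]
  refine ⟨hsum, x + x', y + y', ⟨?_, z + z', ?_, u + u', ?_⟩, ⟨?_, w + w', ?_, v + v', ?_⟩, 0, ?_⟩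
  · simp [map_add, hx, hx', hchar]
  · simp [map_add, hz, hz', hchar]
  · simp only [map_add, hu, hu', mul_add, add_mul]; abel
  · simp [map_add, hy, hy', hchar]
  · simp [map_add, hw, hw', hchar]
  · simp only [map_add, hv, hv', mul_add, add_mul]; abel
  · have : x + y + x' + y' + (x + x') + (y + y') =
        (x + x) + (x' + x') + (y + y) + (y' + y') := by abel
    simp [this, hchar]
end
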